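/- Let k, l ≥ 1 be integers, set m = k + l + 1, and let u ∈ (0,1). Let (Φ_i)_{i=0}^{k−1} with Φ_0 = 0 and (X_j)_{j=0}^{l−1} with X_0 = 0 be as in the multiplication martingale construction (Φ a martingale for (F_i), X_j F_{k−1+j}-measurable with E[X_j | F_{k−2+j}] = X_{j−1}), with increments bounded almost surely by |Φ_i − Φ_{i−1}| ≤ K_x·u·(1+u)^{i−1} and |X_j − X_{j−1}| ≤ K_y·u·(1+u)^{j−1} for constants K_x, K_y ≥ 1. Let δ be a mean-independent rounding error at time m−1 and let Ψ = (1 + Φ_{k−1})(1 + X_{l−1})(1 + δ) − 1 (the relative error of the computed product ẑ = x(1+Φ_{k−1})·y(1+X_{l−1})·(1+δ) of nonzero reals x and y, ẑ = xy(1+Ψ)). Then for every λ ∈ (0,1), with probability at least 1 − λ, |Ψ| ≤ K_x·K_y·√(u·γ_{2(m−1)}(u))·√(ln(2/λ)). -/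

import Mathlib

open MeasureTheory Real

section aux

lemma sr_integrable_of_bdd {Ω : Type*} {m0 : MeasurableSpace Ω} {μ : Measure Ω}
    [IsFiniteMeasure μ] {g : Ω → ℝ} {C : ℝ}
    (hm : AEStronglyMeasurable g μ) (h : ∀ᵐ ω ∂μ, |g ω| ≤ C) : Integrable g μ :=
  Integrable.mono' (integrable_const C) hm (by filter_upwards [h] with ω hω; simpa using hω)

lemma sr_integrable_exp {Ω : Type*} {m0 : MeasurableSpace Ω} {μ : Measure Ω}
    [IsFiniteMeasure μ] {Z : Ω → ℝ} {B : ℝ}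
    (hZ : AEStronglyMeasurable Z μ) (hb : ∀ᵐ ω ∂μ, |Z ω| ≤ B) (s : ℝ) :
    Integrable (fun ω => Real.exp (s * Z ω)) μ := by
  refine sr_integrable_of_bdd (C := Real.exp (|s| * |B|))
    (Real.continuous_exp.comp_aestronglyMeasurable (hZ.const_mul s)) ?_
  filter_upwards [hb] with ω hω
  rw [abs_of_pos (Real.exp_pos _), Real.exp_le_exp]
  calc s * Z ω ≤ |s * Z ω| := le_abs_self _
    _ = |s| * |Z ω| := abs_mul _ _
    _ ≤ |s| * |B| := by
        have h2 : |Z ω| ≤ |B| := hω.trans (le_abs_self _)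
        nlinarith [abs_nonneg s]

def srC (Kx Ky u : ℝ) (n : ℕ) : ℝ := Kx * Ky * u * (1 + u) ^ n

def srS (Kx Ky u : ℝ) (n : ℕ) : ℝ := ∑ r ∈ Finset.range n, (srC Kx Ky u r) ^ 2

lemma srS_zero (Kx Ky u : ℝ) : srS Kx Ky u 0 = 0 := by simp [srS]

lemma srS_succ (Kx Ky u : ℝ) (n : ℕ) :
    srS Kx Ky u (n + 1) = srS Kx Ky u n + (srC Kx Ky u n) ^ 2 := by
  simp [srS, Finset.sum_range_succ]

lemma srC_pos {Kx Ky u : ℝ} (hKx : 0 < Kx) (hKy : 0 < Ky) (hu : 0 < u) (n : ℕ) :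
    0 < srC Kx Ky u n := by
  unfold srC; positivity

lemma srS_pos {Kx Ky u : ℝ} (hKx : 0 < Kx) (hKy : 0 < Ky) (hu : 0 < u) {n : ℕ} (hn : 1 ≤ n) :
    0 < srS Kx Ky u n := by
  unfold srS
  refine Finset.sum_pos (fun r _ => ?_) ⟨0, Finset.mem_range.2 (by omega)⟩
  exact pow_pos (srC_pos hKx hKy hu r) 2

lemma srS_mono {Kx Ky u : ℝ} {a b : ℕ} (hab : a ≤ b) :
    srS Kx Ky u a ≤ srS Kx Ky u b := by
  unfold srS
  exact Finset.sum_le_sum_of_subset_of_nonneg (Finset.range_subset_range.2 hab)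
    (fun r _ _ => sq_nonneg _)

lemma srS_eq {Kx Ky u : ℝ} (hu : 0 < u) (n : ℕ) :
    srS Kx Ky u n = (Kx * Ky * u) ^ 2 * (((1 + u) ^ (2 * n) - 1) / (u ^ 2 + 2 * u)) := by
  have h1 : ((1 + u) ^ 2 : ℝ) ≠ 1 := by nlinarith
  have h2 : srS Kx Ky u n = (Kx * Ky * u) ^ 2 * ∑ r ∈ Finset.range n, ((1 + u) ^ 2) ^ r := by
    rw [Finset.mul_sum]
    unfold srS srC
    refine Finset.sum_congr rfl fun r _ => ?_
    rw [mul_pow, ← pow_mul']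
    rw [pow_mul]
  rw [h2, geom_sum_eq h1]
  have h3 : ((1 + u) ^ 2) ^ n = (1 + u) ^ (2 * n) := by rw [← pow_mul]
  rw [h3]
  congr 1
  congr 1
  ring

lemma sr_mgf_step {Ω : Type*} {G : MeasurableSpace Ω} {m0 : MeasurableSpace Ω} (μ : Measure Ω)
    [IsProbabilityMeasure μ] (hG : G ≤ m0)
    {f Y W : Ω → ℝ} (hf : StronglyMeasurable[G] f) (hY : AEStronglyMeasurable Y μ)
    (hW : ∀ ω, W ω = f ω + Y ω)
    {Bf c : ℝ} (hc : 0 < c) (hfB : ∀ᵐ ω ∂μ, |f ω| ≤ Bf) (hYc : ∀ᵐ ω ∂μ, |Y ω| ≤ c)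
    (hYmean : μ[Y | G] =ᵐ[μ] 0) (s : ℝ) :
    ∫ ω, Real.exp (s * W ω) ∂μ ≤
      Real.exp (s ^ 2 * c ^ 2 / 2) * ∫ ω, Real.exp (s * f ω) ∂μ := by
  have hfm : AEStronglyMeasurable f μ := (hf.mono hG).aestronglyMeasurable
  have hexpG : StronglyMeasurable[G] (fun ω => Real.exp (s * f ω)) :=
    Real.continuous_exp.comp_stronglyMeasurable (hf.const_mul s)
  have hexpm : AEStronglyMeasurable (fun ω => Real.exp (s * f ω)) μ :=
    (hexpG.mono hG).aestronglyMeasurable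
  have hexpB : ∀ᵐ ω ∂μ, |Real.exp (s * f ω)| ≤ Real.exp (|s| * Bf) := by
    filter_upwards [hfB] with ω hω
    rw [abs_of_pos (Real.exp_pos _), Real.exp_le_exp]
    calc s * f ω ≤ |s * f ω| := le_abs_self _
      _ = |s| * |f ω| := abs_mul _ _
      _ ≤ |s| * Bf := by
          have : (0:ℝ) ≤ |f ω| := abs_nonneg _
          nlinarith [abs_nonneg s]
  have hYint : Integrable Y μ := sr_integrable_of_bdd hY hYc
  have hprod_int : Integrable (fun ω => Real.exp (s * f ω) * Y ω) μ :=
    sr_integrable_of_bdd (hexpm.mul hY) (by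
      filter_upwards [hexpB, hYc] with ω h1 h2
      rw [abs_mul]
      exact mul_le_mul h1 h2 (abs_nonneg _) (Real.exp_pos _).le)
  have hzero : ∫ ω, Real.exp (s * f ω) * Y ω ∂μ = 0 := by
    have hpull := condExp_stronglyMeasurable_mul_of_bound hG hexpG hYint
      (Real.exp (|s| * Bf)) (by filter_upwards [hexpB] with ω h; simpa using h)
    have h1 : ∫ ω, Real.exp (s * f ω) * Y ω ∂μ
        = ∫ ω, (μ[(fun ω => Real.exp (s * f ω)) * Y | G]) ω ∂μ :=
      (integral_condExp hG).symm
    rw [h1]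
    have h2 : (μ[(fun ω => Real.exp (s * f ω)) * Y | G]) =ᵐ[μ] 0 := by
      filter_upwards [hpull, hYmean] with ω hp hm
      simp only [Pi.mul_apply, Pi.zero_apply] at *
      rw [hp, hm, mul_zero]
    rw [integral_congr_ae h2]; simp
  have key : ∀ᵐ ω ∂μ, Real.exp (s * W ω) ≤
      Real.exp (s * f ω) * (Real.cosh (s * c) + (Y ω / c) * Real.sinh (s * c)) := by
    filter_upwards [hYc] with ω hω
    rw [hW, mul_add, Real.exp_add]
    have ht : |Y ω / c| ≤ 1 := by
      rw [abs_div, abs_of_pos hc]; exact (div_le_one hc).2 hω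
    have h3 := Real.exp_mul_le_cosh_add_mul_sinh ht (s * c)
    have h4 : Y ω / c * (s * c) = s * Y ω := by field_simp
    rw [h4] at h3
    exact mul_le_mul_of_nonneg_left h3 (Real.exp_pos _).le
  have int1 : Integrable (fun ω => Real.exp (s * W ω)) μ := by
    refine sr_integrable_of_bdd ?_ (C := Real.exp (|s| * (|Bf| + c))) ?_
    · refine (Real.continuous_exp.comp_aestronglyMeasurable ?_)
      have : AEStronglyMeasurable W μ := by
        have := hfm.add hY
        exact this.congr (by filter_upwards with ω; rw [hW]; rfl)
      exact this.const_mul s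
    · filter_upwards [hfB, hYc] with ω h1 h2
      rw [abs_of_pos (Real.exp_pos _), Real.exp_le_exp, hW]
      calc s * (f ω + Y ω) ≤ |s| * |f ω + Y ω| := by
            rw [← abs_mul]; exact le_abs_self _
        _ ≤ |s| * (|Bf| + c) := by
            have := abs_add_le (f ω) (Y ω)
            have h1' : |f ω| ≤ |Bf| := h1.trans (le_abs_self _)
            nlinarith [abs_nonneg s]
  have int2 : Integrable
      (fun ω => Real.exp (s * f ω) * (Real.cosh (s * c) + (Y ω / c) * Real.sinh (s * c))) μ := by
    have : (fun ω => Real.exp (s * f ω) * (Real.cosh (s * c) + (Y ω / c) * Real.sinh (s * c)))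
        = fun ω => Real.cosh (s * c) * Real.exp (s * f ω)
          + (Real.sinh (s * c) / c) * (Real.exp (s * f ω) * Y ω) := by
      funext ω; ring
    rw [this]
    exact ((sr_integrable_of_bdd hexpm hexpB).const_mul _).add (hprod_int.const_mul _)
  calc ∫ ω, Real.exp (s * W ω) ∂μ
      ≤ ∫ ω, Real.exp (s * f ω) * (Real.cosh (s * c) + (Y ω / c) * Real.sinh (s * c)) ∂μ :=
        integral_mono_ae int1 int2 key
    _ = Real.cosh (s * c) * ∫ ω, Real.exp (s * f ω) ∂μ
        + (Real.sinh (s * c) / c) * ∫ ω, Real.exp (s * f ω) * Y ω ∂μ := by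
        rw [← integral_const_mul, ← integral_const_mul,
          ← integral_add ((sr_integrable_of_bdd hexpm hexpB).const_mul _)
            (hprod_int.const_mul _)]
        congr 1; funext ω; ring
    _ = Real.cosh (s * c) * ∫ ω, Real.exp (s * f ω) ∂μ := by rw [hzero, mul_zero, add_zero]
    _ ≤ Real.exp (s ^ 2 * c ^ 2 / 2) * ∫ ω, Real.exp (s * f ω) ∂μ := by
        refine mul_le_mul_of_nonneg_right ?_ (integral_nonneg fun ω => (Real.exp_pos _).le)
        calc Real.cosh (s * c) ≤ Real.exp ((s * c) ^ 2 / 2) := Real.cosh_le_exp_half_sq (s * c)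
          _ = Real.exp (s ^ 2 * c ^ 2 / 2) := by ring_nf

end aux
set_option maxHeartbeats 1000000 in
/-- Multiplication case (Corollary 2): probabilistic bound for the relative error `Ψ` of the
computed product `ẑ = x(1+Φ_{k-1}) · y(1+X_{l-1}) · (1+δ) = xy(1+Ψ)` of nonzero reals `x`
and `y` under stochastic rounding, where `γ_N(u) = (1+u)^N - 1` and `m = k + l + 1`. -/
theorem karatsuba_sr_multiplication_probabilistic_bound
    {Ω : Type*} {m0 : MeasurableSpace Ω} (μ : Measure Ω) [IsProbabilityMeasure μ]
    (F : Filtration ℕ m0)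
    (k l : ℕ) (hk : 1 ≤ k) (hl : 1 ≤ l)
    (m : ℕ) (hm : m = k + l + 1)
    (u : ℝ) (hu0 : 0 < u) (hu1 : u < 1)
    (x y : ℝ) (hx : x ≠ 0) (hy : y ≠ 0)
    (Φ X : ℕ → Ω → ℝ)
    (hΦ0 : ∀ ω, Φ 0 ω = 0) (hX0 : ∀ ω, X 0 ω = 0)
    -- Φ is a martingale w.r.t. F on 0..k-1
    (hΦmeas : ∀ i ≤ k - 1, StronglyMeasurable[F i] (Φ i))
    (hΦint : ∀ i ≤ k - 1, Integrable (Φ i) μ)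
    (hΦmart : ∀ i, 1 ≤ i → i ≤ k - 1 → μ[Φ i | F (i - 1)] =ᵐ[μ] Φ (i - 1))
    -- X is a martingale for the shifted filtration G j = F (k-1+j)
    (hXmeas : ∀ j ≤ l - 1, StronglyMeasurable[F (k - 1 + j)] (X j))
    (hXint : ∀ j ≤ l - 1, Integrable (X j) μ)
    (hXmart : ∀ j, 1 ≤ j → j ≤ l - 1 → μ[X j | F (k - 1 + j - 1)] =ᵐ[μ] X (j - 1))
    -- increment bounds
    (Kx Ky : ℝ) (hKx : 1 ≤ Kx) (hKy : 1 ≤ Ky)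
    (hΦstep : ∀ i, 1 ≤ i → i ≤ k - 1 →
      ∀ᵐ ω ∂μ, |Φ i ω - Φ (i - 1) ω| ≤ Kx * u * (1 + u) ^ (i - 1))
    (hXstep : ∀ j, 1 ≤ j → j ≤ l - 1 →
      ∀ᵐ ω ∂μ, |X j ω - X (j - 1) ω| ≤ Ky * u * (1 + u) ^ (j - 1))
    -- δ is a mean-independent rounding error at time m-1
    (δ : Ω → ℝ)
    (hδmeas : StronglyMeasurable[F (m - 1)] δ)
    (hδbdd : ∀ᵐ ω ∂μ, |δ ω| ≤ u)
    (hδmean : μ[δ | F (m - 2)] =ᵐ[μ] 0)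
    -- relative error of the computed product
    (Ψ : Ω → ℝ)
    (hΨ : ∀ ω, Ψ ω = (1 + Φ (k - 1) ω) * (1 + X (l - 1) ω) * (1 + δ ω) - 1)
    (lam : ℝ) (hlam0 : 0 < lam) (hlam1 : lam < 1) :
    ENNReal.ofReal (1 - lam) ≤
      μ {ω | |Ψ ω| ≤
        Kx * Ky * Real.sqrt (u * ((1 + u) ^ (2 * (m - 1)) - 1)) *
          Real.sqrt (Real.log (2 / lam))} := by
  subst hm
  have hKx0 : (0:ℝ) < Kx := lt_of_lt_of_le one_pos hKx
  have hKy0 : (0:ℝ) < Ky := lt_of_lt_of_le one_pos hKy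
  have hu1' : (1:ℝ) ≤ 1 + u := by linarith
  have hpow1 : ∀ n : ℕ, (1:ℝ) ≤ (1+u)^n := fun n => one_le_pow₀ hu1'
  have htri : ∀ a : ℝ, |a - 1| ≤ |a| + 1 := by
    intro a
    calc |a - 1| = |a + (-1)| := by rw [sub_eq_add_neg]
      _ ≤ |a| + |(-1:ℝ)| := abs_add_le _ _
      _ = |a| + 1 := by norm_num
  -- a.e. bounds on the martingale parts
  have hΦbd : ∀ i, i ≤ k - 1 → ∀ᵐ ω ∂μ, |Φ i ω| ≤ Kx * ((1+u)^i - 1) := by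
    intro i
    induction i with
    | zero => intro _; filter_upwards with ω; simp [hΦ0]
    | succ n ih =>
      intro hn
      filter_upwards [ih (by omega), hΦstep (n+1) (by omega) hn] with ω h1 h2
      simp only [Nat.add_sub_cancel] at h2
      have habs : |Φ (n+1) ω| ≤ |Φ n ω| + |Φ (n+1) ω - Φ n ω| := by
        calc |Φ (n+1) ω| = |Φ n ω + (Φ (n+1) ω - Φ n ω)| := by congr 1; ring
          _ ≤ _ := abs_add_le _ _
      have hps : ((1:ℝ)+u)^(n+1) = (1+u)^n * (1+u) := pow_succ _ _
      nlinarith [hpow1 n]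
  have hXbd : ∀ j, j ≤ l - 1 → ∀ᵐ ω ∂μ, |X j ω| ≤ Ky * ((1+u)^j - 1) := by
    intro j
    induction j with
    | zero => intro _; filter_upwards with ω; simp [hX0]
    | succ n ih =>
      intro hn
      filter_upwards [ih (by omega), hXstep (n+1) (by omega) hn] with ω h1 h2
      simp only [Nat.add_sub_cancel] at h2
      have habs : |X (n+1) ω| ≤ |X n ω| + |X (n+1) ω - X n ω| := by
        calc |X (n+1) ω| = |X n ω + (X (n+1) ω - X n ω)| := by congr 1; ring
          _ ≤ _ := abs_add_le _ _
      have hps : ((1:ℝ)+u)^(n+1) = (1+u)^n * (1+u) := pow_succ _ _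
      nlinarith [hpow1 n]
  have hΦone : ∀ᵐ ω ∂μ, |1 + Φ (k-1) ω| ≤ Kx * (1+u)^(k-1) := by
    filter_upwards [hΦbd (k-1) le_rfl] with ω h
    have h2 := abs_add_le 1 (Φ (k-1) ω)
    simp only [abs_one] at h2
    nlinarith [hpow1 (k-1)]
  have hXone : ∀ j, j ≤ l - 1 → ∀ᵐ ω ∂μ, |1 + X j ω| ≤ Ky * (1+u)^j := by
    intro j hj
    filter_upwards [hXbd j hj] with ω h
    have h2 := abs_add_le 1 (X j ω)
    simp only [abs_one] at h2
    nlinarith [hpow1 j]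
  -- Phase A : MGF bound along Φ
  have hA : ∀ i, i ≤ k - 1 → ∀ s : ℝ,
      ∫ ω, Real.exp (s * Φ i ω) ∂μ ≤ Real.exp (s^2 * srS Kx Ky u i / 2) := by
    intro i
    induction i with
    | zero =>
      intro _ s
      simp only [hΦ0, mul_zero, Real.exp_zero, srS_zero]
      simp
    | succ n ih =>
      intro hn s
      have hle : n ≤ k - 1 := by omega
      have hYmean : μ[(fun ω => Φ (n+1) ω - Φ n ω) | F n] =ᵐ[μ] 0 := by
        have hmart := hΦmart (n+1) (by omega) hn
        simp only [Nat.add_sub_cancel] at hmart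
        have hself : μ[Φ n | F n] = Φ n :=
          condExp_of_stronglyMeasurable (F.le n) (hΦmeas n hle) (hΦint n hle)
        have heq : μ[(fun ω => Φ (n+1) ω - Φ n ω) | F n] = μ[Φ (n+1) - Φ n | F n] := rfl
        rw [heq]
        refine (condExp_sub (hΦint (n+1) hn) (hΦint n hle) _).trans ?_
        filter_upwards [hmart] with ω h2
        simp only [Pi.sub_apply, Pi.zero_apply]
        rw [hself, h2]
        exact sub_self _
      have hYc : ∀ᵐ ω ∂μ, |Φ (n+1) ω - Φ n ω| ≤ srC Kx Ky u n := by
        filter_upwards [hΦstep (n+1) (by omega) hn] with ω h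
        simp only [Nat.add_sub_cancel] at h
        refine h.trans ?_
        unfold srC
        have hpos : (0:ℝ) ≤ Kx * u * (1+u)^n := by positivity
        nlinarith [mul_nonneg (by linarith : (0:ℝ) ≤ Ky - 1) hpos]
      have hstep := sr_mgf_step μ (F.le n) (hΦmeas n hle)
        (Y := fun ω => Φ (n+1) ω - Φ n ω)
        ((((hΦmeas (n+1) hn).mono (F.le _)).aestronglyMeasurable).sub
          (((hΦmeas n hle).mono (F.le _)).aestronglyMeasurable))
        (W := Φ (n+1)) (fun ω => by ring)
        (srC_pos hKx0 hKy0 hu0 n) (hΦbd n hle) hYc hYmean s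
      calc ∫ ω, Real.exp (s * Φ (n+1) ω) ∂μ
          ≤ Real.exp (s^2 * (srC Kx Ky u n)^2 / 2) * ∫ ω, Real.exp (s * Φ n ω) ∂μ := hstep
        _ ≤ Real.exp (s^2 * (srC Kx Ky u n)^2 / 2) * Real.exp (s^2 * srS Kx Ky u n / 2) :=
            mul_le_mul_of_nonneg_left (ih hle s) (Real.exp_pos _).le
        _ = Real.exp (s^2 * srS Kx Ky u (n+1) / 2) := by
            rw [← Real.exp_add, srS_succ]; ring_nf
  -- Phase B : MGF bound along X
  have hB : ∀ j, j ≤ l - 1 → ∀ s : ℝ,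
      ∫ ω, Real.exp (s * ((1 + Φ (k-1) ω) * (1 + X j ω) - 1)) ∂μ
        ≤ Real.exp (s^2 * srS Kx Ky u (k - 1 + j) / 2) := by
    intro j
    induction j with
    | zero =>
      intro _ s
      have heq : ∀ ω, (1 + Φ (k-1) ω) * (1 + X 0 ω) - 1 = Φ (k-1) ω := by
        intro ω; rw [hX0]; ring
      calc ∫ ω, Real.exp (s * ((1 + Φ (k-1) ω) * (1 + X 0 ω) - 1)) ∂μ
          = ∫ ω, Real.exp (s * Φ (k-1) ω) ∂μ := by
            refine integral_congr_ae ?_; filter_upwards with ω; rw [heq]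
        _ ≤ _ := by simpa using hA (k-1) le_rfl s
    | succ n ih =>
      intro hn s
      have hle : n ≤ l - 1 := by omega
      have hΦG : StronglyMeasurable[F (k-1+n)] (Φ (k-1)) :=
        (hΦmeas (k-1) le_rfl).mono (F.mono (by omega))
      have hXG : StronglyMeasurable[F (k-1+n)] (X n) := hXmeas n hle
      have hfG : StronglyMeasurable[F (k-1+n)]
          (fun ω => (1 + Φ (k-1) ω) * (1 + X n ω) - 1) :=
        ((stronglyMeasurable_const.add hΦG).mul (stronglyMeasurable_const.add hXG)).sub
          stronglyMeasurable_const
      have hfB : ∀ᵐ ω ∂μ, |(1 + Φ (k-1) ω) * (1 + X n ω) - 1|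
          ≤ Kx * (1+u)^(k-1) * (Ky * (1+u)^n) + 1 := by
        filter_upwards [hΦone, hXone n hle] with ω h1 h2
        have h3 : |(1 + Φ (k-1) ω) * (1 + X n ω)| ≤ Kx * (1+u)^(k-1) * (Ky * (1+u)^n) := by
          rw [abs_mul]
          exact mul_le_mul h1 h2 (abs_nonneg _) (by positivity)
        calc |(1 + Φ (k-1) ω) * (1 + X n ω) - 1|
            ≤ |(1 + Φ (k-1) ω) * (1 + X n ω)| + 1 := htri _
          _ ≤ _ := by linarith
      have hYc : ∀ᵐ ω ∂μ, |(1 + Φ (k-1) ω) * (X (n+1) ω - X n ω)| ≤ srC Kx Ky u (k-1+n) := by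
        filter_upwards [hΦone, hXstep (n+1) (by omega) hn] with ω h1 h2
        simp only [Nat.add_sub_cancel] at h2
        rw [abs_mul]
        have h3 : |1 + Φ (k-1) ω| * |X (n+1) ω - X n ω|
            ≤ (Kx * (1+u)^(k-1)) * (Ky * u * (1+u)^n) :=
          mul_le_mul h1 h2 (abs_nonneg _) (by positivity)
        refine h3.trans (le_of_eq ?_)
        unfold srC
        rw [pow_add]; ring
      have hYmean : μ[(fun ω => (1 + Φ (k-1) ω) * (X (n+1) ω - X n ω)) | F (k-1+n)]
          =ᵐ[μ] 0 := by
        have hgG : StronglyMeasurable[F (k-1+n)] (fun ω => 1 + Φ (k-1) ω) :=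
          stronglyMeasurable_const.add hΦG
        have hdint : Integrable (fun ω => X (n+1) ω - X n ω) μ :=
          (hXint (n+1) hn).sub (hXint n hle)
        have hpull := condExp_stronglyMeasurable_mul_of_bound (F.le (k-1+n)) hgG hdint
          (Kx * (1+u)^(k-1)) (by filter_upwards [hΦone] with ω h; simpa using h)
        have heq : (fun ω => (1 + Φ (k-1) ω) * (X (n+1) ω - X n ω))
            = (fun ω => 1 + Φ (k-1) ω) * (fun ω => X (n+1) ω - X n ω) := rfl
        rw [heq]
        refine hpull.trans ?_
        have hmartX := hXmart (n+1) (by omega) hn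
        have hidx : k - 1 + (n+1) - 1 = k - 1 + n := by omega
        rw [hidx] at hmartX
        have hselfX : μ[X n | F (k-1+n)] = X n :=
          condExp_of_stronglyMeasurable (F.le _) (hXmeas n hle) (hXint n hle)
        have hd0 : μ[(fun ω => X (n+1) ω - X n ω) | F (k-1+n)] =ᵐ[μ] 0 := by
          have heq2 : μ[(fun ω => X (n+1) ω - X n ω) | F (k-1+n)]
              = μ[X (n+1) - X n | F (k-1+n)] := rfl
          rw [heq2]
          refine (condExp_sub (hXint (n+1) hn) (hXint n hle) _).trans ?_
          filter_upwards [hmartX] with ω h2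
          simp only [Pi.sub_apply, Pi.zero_apply]
          rw [hselfX, h2]
          exact sub_self _
        filter_upwards [hd0] with ω h0
        simp only [Pi.mul_apply, Pi.zero_apply] at *
        rw [h0, mul_zero]
      have hYsm : AEStronglyMeasurable
          (fun ω => (1 + Φ (k-1) ω) * (X (n+1) ω - X n ω)) μ :=
        ((stronglyMeasurable_const.add ((hΦmeas (k-1) le_rfl).mono (F.le _))).mul
          (((hXmeas (n+1) hn).mono (F.le _)).sub
            ((hXmeas n hle).mono (F.le _)))).aestronglyMeasurable
      have hstep := sr_mgf_step μ (F.le (k-1+n)) hfG hYsm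
        (W := fun ω => (1 + Φ (k-1) ω) * (1 + X (n+1) ω) - 1) (fun ω => by ring)
        (srC_pos hKx0 hKy0 hu0 _) hfB hYc hYmean s
      calc ∫ ω, Real.exp (s * ((1 + Φ (k-1) ω) * (1 + X (n+1) ω) - 1)) ∂μ
          ≤ Real.exp (s^2 * (srC Kx Ky u (k-1+n))^2 / 2)
            * ∫ ω, Real.exp (s * ((1 + Φ (k-1) ω) * (1 + X n ω) - 1)) ∂μ := hstep
        _ ≤ Real.exp (s^2 * (srC Kx Ky u (k-1+n))^2 / 2)
            * Real.exp (s^2 * srS Kx Ky u (k-1+n) / 2) :=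
            mul_le_mul_of_nonneg_left (ih hle s) (Real.exp_pos _).le
        _ = Real.exp (s^2 * srS Kx Ky u (k-1+(n+1)) / 2) := by
            have hidx : k - 1 + (n+1) = (k-1+n) + 1 := by omega
            rw [hidx, ← Real.exp_add, srS_succ]; ring_nf
  -- Phase C : final δ step
  have hidx2 : k + l + 1 - 2 = k - 1 + l := by omega
  rw [hidx2] at hδmean
  have hδm0 : AEStronglyMeasurable δ μ := (hδmeas.mono (F.le _)).aestronglyMeasurable
  have hC : ∀ s : ℝ, ∫ ω, Real.exp (s * Ψ ω) ∂μ
      ≤ Real.exp (s^2 * srS Kx Ky u (k - 1 + l) / 2) := by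
    intro s
    have hΦG : StronglyMeasurable[F (k-1+l)] (Φ (k-1)) :=
      (hΦmeas (k-1) le_rfl).mono (F.mono (by omega))
    have hXG : StronglyMeasurable[F (k-1+l)] (X (l-1)) :=
      (hXmeas (l-1) le_rfl).mono (F.mono (by omega))
    have hfG : StronglyMeasurable[F (k-1+l)]
        (fun ω => (1 + Φ (k-1) ω) * (1 + X (l-1) ω) - 1) :=
      ((stronglyMeasurable_const.add hΦG).mul (stronglyMeasurable_const.add hXG)).sub
        stronglyMeasurable_const
    have hfB : ∀ᵐ ω ∂μ, |(1 + Φ (k-1) ω) * (1 + X (l-1) ω) - 1|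
        ≤ Kx * (1+u)^(k-1) * (Ky * (1+u)^(l-1)) + 1 := by
      filter_upwards [hΦone, hXone (l-1) le_rfl] with ω h1 h2
      have h3 : |(1 + Φ (k-1) ω) * (1 + X (l-1) ω)|
          ≤ Kx * (1+u)^(k-1) * (Ky * (1+u)^(l-1)) := by
        rw [abs_mul]
        exact mul_le_mul h1 h2 (abs_nonneg _) (by positivity)
      calc |(1 + Φ (k-1) ω) * (1 + X (l-1) ω) - 1|
          ≤ |(1 + Φ (k-1) ω) * (1 + X (l-1) ω)| + 1 := htri _
        _ ≤ _ := by linarith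
    have hYc : ∀ᵐ ω ∂μ, |(1 + Φ (k-1) ω) * (1 + X (l-1) ω) * δ ω|
        ≤ srC Kx Ky u (k-1+(l-1)) := by
      filter_upwards [hΦone, hXone (l-1) le_rfl, hδbdd] with ω h1 h2 h3
      rw [abs_mul, abs_mul]
      have h4 : |1 + Φ (k-1) ω| * |1 + X (l-1) ω| * |δ ω|
          ≤ (Kx * (1+u)^(k-1)) * (Ky * (1+u)^(l-1)) * u := by
        refine mul_le_mul (mul_le_mul h1 h2 (abs_nonneg _) (by positivity)) h3
          (abs_nonneg _) (by positivity)
      refine h4.trans (le_of_eq ?_)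
      unfold srC
      rw [pow_add]; ring
    have hYmean : μ[(fun ω => (1 + Φ (k-1) ω) * (1 + X (l-1) ω) * δ ω) | F (k-1+l)]
        =ᵐ[μ] 0 := by
      have hgG : StronglyMeasurable[F (k-1+l)]
          (fun ω => (1 + Φ (k-1) ω) * (1 + X (l-1) ω)) :=
        (stronglyMeasurable_const.add hΦG).mul (stronglyMeasurable_const.add hXG)
      have hδint : Integrable δ μ := sr_integrable_of_bdd hδm0 hδbdd
      have hpull := condExp_stronglyMeasurable_mul_of_bound (F.le (k-1+l)) hgG hδint
        (Kx * (1+u)^(k-1) * (Ky * (1+u)^(l-1))) ?_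
      · have heq : (fun ω => (1 + Φ (k-1) ω) * (1 + X (l-1) ω) * δ ω)
            = (fun ω => (1 + Φ (k-1) ω) * (1 + X (l-1) ω)) * δ := rfl
        rw [heq]
        refine hpull.trans ?_
        filter_upwards [hδmean] with ω h0
        simp only [Pi.mul_apply, Pi.zero_apply] at *
        rw [h0, mul_zero]
      · filter_upwards [hΦone, hXone (l-1) le_rfl] with ω h1 h2
        rw [Real.norm_eq_abs, abs_mul]
        exact mul_le_mul h1 h2 (abs_nonneg _) (by positivity)
    have hYsm : AEStronglyMeasurable
        (fun ω => (1 + Φ (k-1) ω) * (1 + X (l-1) ω) * δ ω) μ :=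
      (((stronglyMeasurable_const.add ((hΦmeas (k-1) le_rfl).mono (F.le _))).mul
        (stronglyMeasurable_const.add ((hXmeas (l-1) le_rfl).mono (F.le _)))).mul
        (hδmeas.mono (F.le _))).aestronglyMeasurable
    have hstep := sr_mgf_step μ (F.le (k-1+l)) hfG hYsm
      (W := Ψ) (fun ω => by rw [hΨ]; ring)
      (srC_pos hKx0 hKy0 hu0 _) hfB hYc hYmean s
    calc ∫ ω, Real.exp (s * Ψ ω) ∂μ
        ≤ Real.exp (s^2 * (srC Kx Ky u (k-1+(l-1)))^2 / 2)
          * ∫ ω, Real.exp (s * ((1 + Φ (k-1) ω) * (1 + X (l-1) ω) - 1)) ∂μ := hstep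
      _ ≤ Real.exp (s^2 * (srC Kx Ky u (k-1+(l-1)))^2 / 2)
          * Real.exp (s^2 * srS Kx Ky u (k-1+(l-1)) / 2) :=
          mul_le_mul_of_nonneg_left (hB (l-1) le_rfl s) (Real.exp_pos _).le
      _ = Real.exp (s^2 * srS Kx Ky u (k-1+l) / 2) := by
          have hidx : k - 1 + l = (k-1+(l-1)) + 1 := by omega
          rw [hidx, ← Real.exp_add, srS_succ]; ring_nf
  -- Chernoff bounds
  simp only [Nat.add_sub_cancel]
  set g : ℝ := (1+u)^(2*(k+l)) - 1 with hgdef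
  have hgpos : 0 < g := by
    have h1 : (1:ℝ) < (1+u)^(2*(k+l)) := by
      refine one_lt_pow₀ (by linarith) (by omega)
    simp only [hgdef]; linarith
  set L : ℝ := Real.log (2/lam) with hLdef
  have hL : 0 < L := Real.log_pos ((one_lt_div hlam0).2 (by linarith))
  set t : ℝ := Kx * Ky * Real.sqrt (u * g) * Real.sqrt L with htdef
  have htpos : 0 < t := by
    have h1 : 0 < Real.sqrt (u*g) := Real.sqrt_pos.2 (by positivity)
    have h2 : 0 < Real.sqrt L := Real.sqrt_pos.2 hL
    exact mul_pos (mul_pos (mul_pos hKx0 hKy0) h1) h2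
  have ht2 : t^2 = (Kx*Ky)^2 * (u*g) * L := by
    have h1 : t^2 = (Kx*Ky)^2 * Real.sqrt (u*g)^2 * Real.sqrt L^2 := by
      rw [htdef]; ring
    rw [h1, Real.sq_sqrt (by positivity), Real.sq_sqrt hL.le]
  set V : ℝ := srS Kx Ky u (k-1+l) with hVdef
  have hVpos : 0 < V := srS_pos hKx0 hKy0 hu0 (by omega)
  have hkey : 2 * V * L ≤ t^2 := by
    set D : ℝ := u^2 + 2*u with hDdef
    have hD : 0 < D := by positivity
    have hVle : V ≤ (Kx*Ky*u)^2 * (g/D) := by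
      have h1 : V ≤ srS Kx Ky u (k+l) := srS_mono (by omega)
      rw [srS_eq hu0 (k+l)] at h1
      exact h1
    have hq : 0 ≤ g / D := by positivity
    have h2 : 2 * ((Kx*Ky*u)^2 * (g/D)) ≤ (Kx*Ky)^2 * (u*g) := by
      have expand : (Kx*Ky)^2 * (u*g) = (Kx*Ky)^2*(g/D)*(u*D) := by
        rw [hDdef]
        field_simp
      rw [expand]
      have hl2 : 2*((Kx*Ky*u)^2*(g/D)) = (Kx*Ky)^2*(g/D)*(2*u^2) := by ring
      rw [hl2]
      refine mul_le_mul_of_nonneg_left ?_ (by positivity)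
      rw [hDdef]
      nlinarith [hu0]
    rw [ht2]
    calc 2 * V * L ≤ 2 * ((Kx*Ky*u)^2 * (g/D)) * L := by
          have h3 := mul_le_mul_of_nonneg_right hVle hL.le
          linarith
      _ ≤ (Kx*Ky)^2 * (u*g) * L := mul_le_mul_of_nonneg_right h2 hL.le
  set BΨ : ℝ := Kx * (1+u)^(k-1) * (Ky * (1+u)^(l-1)) * (1+u) + 1 with hBΨdef
  have hΨsm : StronglyMeasurable Ψ := by
    have heq : Ψ = fun ω => (1 + Φ (k-1) ω) * (1 + X (l-1) ω) * (1 + δ ω) - 1 := funext hΨ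
    rw [heq]
    exact (((stronglyMeasurable_const.add ((hΦmeas (k-1) le_rfl).mono (F.le _))).mul
      (stronglyMeasurable_const.add ((hXmeas (l-1) le_rfl).mono (F.le _)))).mul
      (stronglyMeasurable_const.add (hδmeas.mono (F.le _)))).sub stronglyMeasurable_const
  have hΨbd : ∀ᵐ ω ∂μ, |Ψ ω| ≤ BΨ := by
    filter_upwards [hΦone, hXone (l-1) le_rfl, hδbdd] with ω h1 h2 h3
    rw [hΨ]
    have h4 : |1 + δ ω| ≤ 1 + u := by
      have := abs_add_le 1 (δ ω); simp only [abs_one] at this; linarith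
    have h5 : |(1 + Φ (k-1) ω) * (1 + X (l-1) ω) * (1 + δ ω)|
        ≤ Kx * (1+u)^(k-1) * (Ky * (1+u)^(l-1)) * (1+u) := by
      rw [abs_mul, abs_mul]
      exact mul_le_mul (mul_le_mul h1 h2 (abs_nonneg _) (by positivity)) h4
        (abs_nonneg _) (by positivity)
    calc |(1 + Φ (k-1) ω) * (1 + X (l-1) ω) * (1 + δ ω) - 1|
        ≤ |(1 + Φ (k-1) ω) * (1 + X (l-1) ω) * (1 + δ ω)| + 1 := htri _
      _ ≤ BΨ := by rw [hBΨdef]; linarith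
  have tail : ∀ Z : Ω → ℝ, AEStronglyMeasurable Z μ → (∀ᵐ ω ∂μ, |Z ω| ≤ BΨ) →
      (∀ s : ℝ, ∫ ω, Real.exp (s * Z ω) ∂μ ≤ Real.exp (s^2 * V / 2)) →
      (μ {ω | t ≤ Z ω}).toReal ≤ lam / 2 := by
    intro Z hZm hZb hZmgf
    have hs0 : 0 < t / V := div_pos htpos hVpos
    have hint : Integrable (fun ω => Real.exp ((t/V) * Z ω)) μ := sr_integrable_exp hZm hZb _
    have h1 := ProbabilityTheory.measure_ge_le_exp_mul_mgf (X := Z) (μ := μ) t hs0.le hint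
    have h2 : ProbabilityTheory.mgf Z μ (t/V) ≤ Real.exp ((t/V)^2 * V/2) := hZmgf _
    calc (μ {ω | t ≤ Z ω}).toReal
        ≤ Real.exp (-(t/V)*t) * ProbabilityTheory.mgf Z μ (t/V) := h1
      _ ≤ Real.exp (-(t/V)*t) * Real.exp ((t/V)^2*V/2) :=
          mul_le_mul_of_nonneg_left h2 (Real.exp_pos _).le
      _ = Real.exp ((t/V)^2*V/2 - (t/V)*t) := by rw [← Real.exp_add]; ring_nf
      _ ≤ Real.exp (-L) := by
          rw [Real.exp_le_exp]
          have hV0 : V ≠ 0 := hVpos.ne'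
          have hst : (t/V)*t = t^2 / V := by field_simp
          have hsv : (t/V)^2 * V / 2 = t^2/(2*V) := by field_simp
          rw [hst, hsv]
          have hL2 : L ≤ t^2/(2*V) := (le_div_iff₀ (by positivity)).2 (by linarith [hkey])
          have hL3 : t^2/(2*V) - t^2/V = -(t^2/(2*V)) := by field_simp; ring
          rw [hL3]
          linarith
      _ = lam / 2 := by
          rw [Real.exp_neg, hLdef, Real.exp_log (by positivity), inv_div]
  have tailP : (μ {ω | t ≤ Ψ ω}).toReal ≤ lam/2 :=
    tail Ψ hΨsm.aestronglyMeasurable hΨbd hC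
  have tailN : (μ {ω | t ≤ -Ψ ω}).toReal ≤ lam/2 := by
    refine tail (fun ω => -Ψ ω) (hΨsm.neg.aestronglyMeasurable) ?_ ?_
    · filter_upwards [hΨbd] with ω h; simpa [abs_neg] using h
    · intro s
      calc ∫ ω, Real.exp (s * -Ψ ω) ∂μ = ∫ ω, Real.exp ((-s) * Ψ ω) ∂μ := by
            refine integral_congr_ae ?_; filter_upwards with ω; ring_nf
        _ ≤ Real.exp ((-s)^2 * V / 2) := hC (-s)
        _ = Real.exp (s^2 * V / 2) := by ring_nf
  have hsubset : {ω | ¬ |Ψ ω| ≤ t} ⊆ {ω | t ≤ Ψ ω} ∪ {ω | t ≤ -Ψ ω} := by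
    intro ω hω
    simp only [Set.mem_setOf_eq, not_le] at hω
    rcases lt_abs.1 hω with h | h
    · exact Or.inl h.le
    · exact Or.inr h.le
  have hbad : μ {ω | ¬ |Ψ ω| ≤ t} ≤ ENNReal.ofReal lam := by
    calc μ {ω | ¬ |Ψ ω| ≤ t} ≤ μ ({ω | t ≤ Ψ ω} ∪ {ω | t ≤ -Ψ ω}) := measure_mono hsubset
      _ ≤ μ {ω | t ≤ Ψ ω} + μ {ω | t ≤ -Ψ ω} := measure_union_le _ _
      _ ≤ ENNReal.ofReal (lam/2) + ENNReal.ofReal (lam/2) :=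
          add_le_add
            ((ENNReal.le_ofReal_iff_toReal_le (measure_ne_top μ _) (by positivity)).2 tailP)
            ((ENNReal.le_ofReal_iff_toReal_le (measure_ne_top μ _) (by positivity)).2 tailN)
      _ = ENNReal.ofReal lam := by
          rw [← ENNReal.ofReal_add (by positivity) (by positivity)]; norm_num
  have hbadmeas : MeasurableSet {ω | ¬ |Ψ ω| ≤ t} := by
    have heq : {ω | ¬ |Ψ ω| ≤ t} = {ω | t < |Ψ ω|} := by ext ω; simp [not_le]
    rw [heq]
    exact measurableSet_lt measurable_const hΨsm.measurable.abs
  have hgood : {ω | |Ψ ω| ≤ t} = {ω | ¬ |Ψ ω| ≤ t}ᶜ := by ext ω; simp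
  rw [hgood, prob_compl_eq_one_sub hbadmeas]
  calc ENNReal.ofReal (1 - lam) = ENNReal.ofReal 1 - ENNReal.ofReal lam :=
        ENNReal.ofReal_sub 1 hlam0.le
    _ = 1 - ENNReal.ofReal lam := by rw [ENNReal.ofReal_one]
    _ ≤ 1 - μ {ω | ¬ |Ψ ω| ≤ t} := tsub_le_tsub_left hbad 1
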